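/- Let C be an abelian category in which every short exact sequence splits, and let O be an object of C such that every object of C is a retract of a finite biproduct O^{⊕k} of copies of O. Then every object X of the derived category of C whose homology Hⁿ(X) vanishes for all but finitely many n ∈ ℤ is a retract of a finite biproduct of shifts of O, i.e. there exist an s ∈ ℕ and integers m_1, …, m_s such that X is a retract of ⨁_{i=1}^{s} O[m_i] in the derived category. -/

import Mathlib

open CategoryTheory Limits HomologicalComplex

attribute [local instance] CategoryTheory.Abelian.hasFiniteBiproducts

namespace RetractAux

variable {C : Type*} [Category C] [Abelian C]

lemma section_of_epi
    (hsplit : ∀ (A B : C) (f : A ⟶ B), Mono f → ∃ r : B ⟶ A, f ≫ r = 𝟙 A)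
    {A B : C} (p : A ⟶ B) [Epi p] : ∃ s : B ⟶ A, s ≫ p = 𝟙 B := by
  obtain ⟨t, ht⟩ := hsplit _ _ (kernel.ι p) inferInstance
  let S : ShortComplex C := ShortComplex.mk (kernel.ι p) p (kernel.condition p)
  have hS : S.Exact := S.exact_of_f_is_kernel (kernelIsKernel p)
  have hg : Epi S.g := by dsimp only [S]; infer_instance
  exact ⟨(ShortComplex.Splitting.ofExactOfRetraction S hS t ht hg).s,
    (ShortComplex.Splitting.ofExactOfRetraction S hS t ht hg).s_g⟩

lemma homologyMap_eq_zero {K L : CochainComplex C ℤ} (φ : K ⟶ L) (m : ℤ)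
    (h : φ.f m = 0) : homologyMap φ m = 0 := by
  have hc : cyclesMap φ m = 0 := by
    rw [← cancel_mono (L.iCycles m), cyclesMap_i, h, comp_zero, zero_comp]
  rw [← cancel_epi (K.homologyπ m), homologyπ_naturality, comp_zero, hc, zero_comp]

end RetractAux

/-- Let `C` be an abelian category in which every short exact sequence splits (equivalently,
every monomorphism admits a retraction), and let `O` be an object of `C` such that every
object of `C` is a retract of a finite biproduct of copies of `O`.  Then every object `X` of
the derived category of `C` whose homology vanishes in all but finitely many degrees is a
retract of a finite biproduct of shifts of `O` (where `O⟦m⟧` denotes the shift by `m` of `O`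
placed in degree `0`). -/
theorem retract_biproduct_shifts_of_generator
    (C : Type*) [Category C] [Abelian C] [HasDerivedCategory C]
    (hsplit : ∀ (A B : C) (f : A ⟶ B), Mono f → ∃ r : B ⟶ A, f ≫ r = 𝟙 A)
    (O : C)
    (hO : ∀ Y : C, ∃ (k : ℕ) (i : Y ⟶ ⨁ (fun _ : Fin k => O))
      (r : (⨁ (fun _ : Fin k => O)) ⟶ Y), i ≫ r = 𝟙 Y)
    (X : DerivedCategory C)
    (hfin : Set.Finite {n : ℤ | ¬ IsZero ((DerivedCategory.homologyFunctor C n).obj X)}) :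
    ∃ (s : ℕ) (m : Fin s → ℤ)
      (i : X ⟶ ⨁ (fun j : Fin s => ((DerivedCategory.singleFunctor C 0).obj O)⟦m j⟧))
      (r : (⨁ (fun j : Fin s => ((DerivedCategory.singleFunctor C 0).obj O)⟦m j⟧)) ⟶ X),
      i ≫ r = 𝟙 X := by
  classical
  obtain ⟨K, ⟨eX⟩⟩ : ∃ K : CochainComplex C ℤ, Nonempty (DerivedCategory.Q.obj K ≅ X) :=
    haveI := Localization.essSurj DerivedCategory.Q
      (HomologicalComplex.quasiIso C (ComplexShape.up ℤ))
    ⟨_, ⟨DerivedCategory.Q.objObjPreimageIso X⟩⟩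
  set S : Finset ℤ := hfin.toFinset with hSdef
  -- homology of K vanishes outside S
  have hK : ∀ m : ℤ, m ∉ S → IsZero (K.homology m) := by
    intro m hm
    rw [hSdef, Set.Finite.mem_toFinset, Set.mem_setOf_eq, not_not] at hm
    exact hm.of_iso (((DerivedCategory.homologyFunctorFactors C m).symm.app K) ≪≫
      (DerivedCategory.homologyFunctor C m).mapIso eX)
  -- splittings of cycles and homology
  have hrc : ∀ n : ℤ, ∃ r, K.iCycles n ≫ r = 𝟙 _ :=
    fun n => hsplit _ _ (K.iCycles n) inferInstance
  choose rc hrc using hrc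
  have hsh : ∀ n : ℤ, ∃ s, s ≫ K.homologyπ n = 𝟙 _ :=
    fun n => RetractAux.section_of_epi hsplit _
  choose sh hsh using hsh
  choose k iO rO hO using hO
  -- chain maps to and from single complexes
  let f : ∀ n : ℤ, K ⟶ (HomologicalComplex.single C (ComplexShape.up ℤ) n).obj (K.homology n) :=
    fun n => mkHomToSingle (rc n ≫ K.homologyπ n) (fun i hi => by
      have h1 : K.d i n ≫ rc n = K.toCycles i n := by
        rw [← K.toCycles_i i n, Category.assoc, hrc n, Category.comp_id]
      rw [← Category.assoc, h1, toCycles_comp_homologyπ])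
  let g : ∀ n : ℤ, (HomologicalComplex.single C (ComplexShape.up ℤ) n).obj (K.homology n) ⟶ K :=
    fun n => mkHomFromSingle (sh n ≫ K.iCycles n) (fun j hj => by
      rw [Category.assoc, iCycles_d, comp_zero])
  have hfg : ∀ n : ℤ, homologyMap (f n ≫ g n) n = 𝟙 _ := by
    intro n
    have hcomp : (f n ≫ g n).f n = rc n ≫ K.homologyπ n ≫ sh n ≫ K.iCycles n := by
      simp [f, g, mkHomToSingle_f, mkHomFromSingle_f]
    have hcy : cyclesMap (f n ≫ g n) n = K.homologyπ n ≫ sh n := by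
      rw [← cancel_mono (K.iCycles n), cyclesMap_i, hcomp]
      simp [reassoc_of% (hrc n)]
    rw [← cancel_epi (K.homologyπ n), homologyπ_naturality, hcy, Category.assoc, hsh n]
  have hfg0 : ∀ n m : ℤ, m ≠ n → homologyMap (f n ≫ g n) m = 0 := by
    intro n m hm
    apply RetractAux.homologyMap_eq_zero
    have hz := isZero_single_obj_X (ComplexShape.up ℤ) n (K.homology n) m hm
    rw [HomologicalComplex.comp_f, hz.eq_of_tgt ((f n).f m) 0, zero_comp]
  -- the sum of the projectors is a quasi-isomorphism
  let e : K ⟶ K := ∑ n ∈ S, (f n ≫ g n)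
  have hesum : ∀ m : ℤ, homologyMap e m = ∑ n ∈ S, homologyMap (f n ≫ g n) m := by
    intro m
    exact (HomologicalComplex.homologyFunctor C (ComplexShape.up ℤ) m).map_sum _ _
  haveI he : QuasiIso e := by
    rw [quasiIso_iff]
    intro m
    rw [quasiIsoAt_iff_isIso_homologyMap]
    by_cases hm : m ∈ S
    · have : homologyMap e m = 𝟙 _ := by
        rw [hesum m, Finset.sum_eq_single_of_mem m hm (fun n _ hn => hfg0 n m (Ne.symm hn)),
          hfg m]
      rw [this]; infer_instance
    · have : homologyMap e m = 𝟙 _ := (hK m hm).eq_of_src _ _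
      rw [this]; infer_instance
  haveI hQe : IsIso (DerivedCategory.Q.map e) := inferInstance
  -- identifications of singles in the derived category
  let γ : ∀ (n : ℤ) (A : C),
      DerivedCategory.Q.obj ((HomologicalComplex.single C (ComplexShape.up ℤ) n).obj A)
        ≅ (DerivedCategory.singleFunctor C n).obj A := fun n A => Iso.refl _
  let σ : ∀ n : ℤ, ((DerivedCategory.singleFunctor C 0).obj O)⟦(-n : ℤ)⟧
      ≅ (DerivedCategory.singleFunctor C n).obj O :=
    fun n => ((DerivedCategory.singleFunctors C).shiftIso (-n) n 0 (by ring)).app O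
  -- maps between the singles of homology and shifted copies of O
  let u : ∀ (n : ℤ) (j : Fin (k (K.homology n))),
      DerivedCategory.Q.obj
        ((HomologicalComplex.single C (ComplexShape.up ℤ) n).obj (K.homology n)) ⟶
        ((DerivedCategory.singleFunctor C 0).obj O)⟦(-n : ℤ)⟧ :=
    fun n j => DerivedCategory.Q.map ((HomologicalComplex.single C (ComplexShape.up ℤ) n).map
      (iO (K.homology n) ≫ biproduct.π (fun _ : Fin (k (K.homology n)) => O) j)) ≫ (γ n O).hom ≫ (σ n).inv
  let v : ∀ (n : ℤ) (j : Fin (k (K.homology n))),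
      ((DerivedCategory.singleFunctor C 0).obj O)⟦(-n : ℤ)⟧ ⟶
        DerivedCategory.Q.obj
          ((HomologicalComplex.single C (ComplexShape.up ℤ) n).obj (K.homology n)) :=
    fun n j => (σ n).hom ≫ (γ n O).inv ≫
      DerivedCategory.Q.map ((HomologicalComplex.single C (ComplexShape.up ℤ) n).map
        (biproduct.ι (fun _ : Fin (k (K.homology n)) => O) j ≫ rO (K.homology n)))
  have huv : ∀ n : ℤ, ∑ j, u n j ≫ v n j = 𝟙 _ := by
    intro n
    have h1 : ∀ j, u n j ≫ v n j =
        DerivedCategory.Q.map ((HomologicalComplex.single C (ComplexShape.up ℤ) n).map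
          ((iO (K.homology n) ≫ biproduct.π (fun _ : Fin (k (K.homology n)) => O) j) ≫
            (biproduct.ι (fun _ : Fin (k (K.homology n)) => O) j ≫ rO (K.homology n)))) := by
      intro j
      simp only [u, v, Category.assoc, Iso.inv_hom_id_assoc, Iso.hom_inv_id_assoc,
        ← Functor.map_comp]
    rw [Finset.sum_congr rfl (fun j _ => h1 j), ← Functor.map_sum, ← Functor.map_sum]
    have h2 : (∑ j : Fin (k (K.homology n)),
        (iO (K.homology n) ≫ biproduct.π (fun _ : Fin (k (K.homology n)) => O) j) ≫
          (biproduct.ι (fun _ : Fin (k (K.homology n)) => O) j ≫ rO (K.homology n)))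
        = 𝟙 (K.homology n) := by
      have h3 : (∑ j : Fin (k (K.homology n)),
          (iO (K.homology n) ≫ biproduct.π (fun _ : Fin (k (K.homology n)) => O) j) ≫
            (biproduct.ι (fun _ : Fin (k (K.homology n)) => O) j ≫ rO (K.homology n)))
          = iO (K.homology n) ≫ (∑ j : Fin (k (K.homology n)),
            biproduct.π (fun _ => O) j ≫ biproduct.ι (fun _ => O) j) ≫ rO (K.homology n) := by
        rw [Preadditive.sum_comp, Preadditive.comp_sum]
        exact Finset.sum_congr rfl (fun j _ => by simp [Category.assoc])
      rw [h3, biproduct.total, Category.id_comp, hO]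
    rw [h2, CategoryTheory.Functor.map_id, CategoryTheory.Functor.map_id]
  -- assembling the biproduct
  let ι' := (n : {x // x ∈ S}) × Fin (k (K.homology (n : ℤ)))
  let i₁ : DerivedCategory.Q.obj K ⟶
      ⨁ (fun p : ι' => ((DerivedCategory.singleFunctor C 0).obj O)⟦(-(p.1 : ℤ))⟧) :=
    biproduct.lift (fun p => DerivedCategory.Q.map (f (p.1 : ℤ)) ≫ u (p.1 : ℤ) p.2)
  let r₁ : (⨁ (fun p : ι' => ((DerivedCategory.singleFunctor C 0).obj O)⟦(-(p.1 : ℤ))⟧)) ⟶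
      DerivedCategory.Q.obj K :=
    biproduct.desc (fun p => v (p.1 : ℤ) p.2 ≫ DerivedCategory.Q.map (g (p.1 : ℤ)))
  have hir : i₁ ≫ r₁ = DerivedCategory.Q.map e := by
    rw [biproduct.lift_desc, ← Finset.univ_sigma_univ, Finset.sum_sigma]
    have hinner : ∀ n : {x // x ∈ S},
        (∑ j : Fin (k (K.homology (n : ℤ))),
          (DerivedCategory.Q.map (f (n : ℤ)) ≫ u (n : ℤ) j) ≫
            (v (n : ℤ) j ≫ DerivedCategory.Q.map (g (n : ℤ))))
          = DerivedCategory.Q.map (f (n : ℤ) ≫ g (n : ℤ)) := by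
      intro n
      have : (∑ j : Fin (k (K.homology (n : ℤ))),
          (DerivedCategory.Q.map (f (n : ℤ)) ≫ u (n : ℤ) j) ≫
            (v (n : ℤ) j ≫ DerivedCategory.Q.map (g (n : ℤ))))
          = DerivedCategory.Q.map (f (n : ℤ)) ≫
            (∑ j : Fin (k (K.homology (n : ℤ))), u (n : ℤ) j ≫ v (n : ℤ) j) ≫
            DerivedCategory.Q.map (g (n : ℤ)) := by
        rw [Preadditive.sum_comp, Preadditive.comp_sum]
        exact Finset.sum_congr rfl (fun j _ =>
          (Category.assoc _ _ _).trans (congrArg _ (Category.assoc _ _ _).symm))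
      rw [this, huv (n : ℤ), Category.id_comp, ← Functor.map_comp]
    rw [Finset.sum_congr rfl (fun n _ => hinner n), ← Functor.map_sum]
    congr 1
    exact Finset.sum_coe_sort S (fun n => f n ≫ g n)
  -- reindexing by Fin s
  let ε := Fintype.equivFin ι'
  let m : Fin (Fintype.card ι') → ℤ := fun j => -(((ε.symm j).1 : ℤ))
  let W : (⨁ (fun p : ι' => ((DerivedCategory.singleFunctor C 0).obj O)⟦(-(p.1 : ℤ))⟧)) ≅
      ⨁ (fun j : Fin (Fintype.card ι') => ((DerivedCategory.singleFunctor C 0).obj O)⟦m j⟧) :=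
    biproduct.whiskerEquiv ε (fun p => eqToIso (by simp [m]))
  refine ⟨Fintype.card ι', m, eX.inv ≫ i₁ ≫ W.hom,
    W.inv ≫ r₁ ≫ inv (DerivedCategory.Q.map e) ≫ eX.hom, ?_⟩
  have h4 : i₁ ≫ r₁ ≫ inv (DerivedCategory.Q.map e) = 𝟙 _ := by
    rw [← Category.assoc, hir, IsIso.hom_inv_id]
  calc (eX.inv ≫ i₁ ≫ W.hom) ≫ W.inv ≫ r₁ ≫ inv (DerivedCategory.Q.map e) ≫ eX.hom
      = eX.inv ≫ (i₁ ≫ (W.hom ≫ W.inv) ≫ r₁ ≫ inv (DerivedCategory.Q.map e)) ≫ eX.hom := by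
        simp only [Category.assoc]
    _ = 𝟙 X := by rw [W.hom_inv_id, Category.id_comp, h4, Category.id_comp, eX.inv_hom_id]
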